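/- Let X ⊆ 𝔽_p^n with |X| = α·p^n for α ∈ (0,1], and let R satisfy Spec_X(α^{3/2}) ⊆ R ⊆ Spec_X(α^{3/2}/2). Define V = {v ∈ 𝔽_p^n : ⟨v,r⟩ = 0 for all r ∈ R}. Then dim(V) ≥ n − 4/α². -/

import Mathlib

open Finset
open scoped Classical

noncomputable def qomega (p : ℕ) : ℂ := Complex.exp (2 * Real.pi * Complex.I / p)

section basic
variable {p : ℕ} [hp : Fact p.Prime]

lemma qomega_pow_p : qomega p ^ p = 1 :=
  (Complex.isPrimitiveRoot_exp p hp.out.ne_zero).pow_eq_one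

lemma qpow_mod (k : ℕ) : qomega p ^ (k % p) = qomega p ^ k := by
  conv_rhs => rw [← Nat.div_add_mod k p]
  rw [pow_add, pow_mul, qomega_pow_p, one_pow, one_mul]

lemma psi_add (a b : ZMod p) :
    qomega p ^ ((a + b).val) = qomega p ^ a.val * qomega p ^ b.val := by
  haveI : NeZero p := ⟨hp.out.ne_zero⟩
  rw [ZMod.val_add, qpow_mod, pow_add]

lemma psi_abs (a : ZMod p) : ‖qomega p ^ a.val‖ = 1 := by
  rw [norm_pow, qomega, Complex.norm_exp]
  have : (2 * Real.pi * Complex.I / p).re = 0 := by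
    simp [Complex.div_re]
  rw [this, Real.exp_zero, one_pow]

lemma psi_conj (a : ZMod p) :
    (starRingEnd ℂ) (qomega p ^ a.val) = qomega p ^ ((-a).val) := by
  haveI : NeZero p := ⟨hp.out.ne_zero⟩
  have h1 : qomega p ^ a.val * qomega p ^ ((-a).val) = 1 := by
    rw [← psi_add]; simp
  have h2 : qomega p ^ a.val * (starRingEnd ℂ) (qomega p ^ a.val) = 1 := by
    rw [Complex.mul_conj, ← Complex.sq_norm, psi_abs]; norm_num
  have hne : qomega p ^ a.val ≠ 0 := by
    intro h; rw [h] at h2; simpa using h2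
  exact mul_left_cancel₀ hne (h2.trans h1.symm)

lemma sum_psi_zmod {c : ZMod p} (hc : c ≠ 0) :
    ∑ y : ZMod p, qomega p ^ ((c * y).val) = 0 := by
  haveI : NeZero p := ⟨hp.out.ne_zero⟩
  rw [Fintype.sum_bijective _ (mulLeft_bijective₀ c hc)
    (fun y : ZMod p => qomega p ^ ((c * y).val)) (fun y : ZMod p => qomega p ^ y.val)
    (fun y => rfl)]
  have hb : ∑ y : ZMod p, qomega p ^ y.val = ∑ i ∈ Finset.range p, qomega p ^ i := by
    apply Finset.sum_nbij' (fun y : ZMod p => y.val) (fun i : ℕ => (i : ZMod p))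
    · intro a _; exact Finset.mem_range.mpr (ZMod.val_lt a)
    · intro a _; exact Finset.mem_univ _
    · intro a _; exact ZMod.natCast_rightInverse a
    · intro i hi; exact ZMod.val_cast_of_lt (Finset.mem_range.mp hi)
    · intro a _; rfl
  rw [hb]
  exact (Complex.isPrimitiveRoot_exp p hp.out.ne_zero).geom_sum_eq_zero hp.out.one_lt

end basic

noncomputable def fhat {p n : ℕ} (X : Finset (Fin n → ZMod p)) (y : Fin n → ZMod p) : ℂ :=
  ((p : ℂ) ^ n)⁻¹ * ∑ x ∈ X, qomega p ^ ((∑ i, x i * y i : ZMod p)).val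

section vec
variable {p : ℕ} [hp : Fact p.Prime] {n : ℕ}

lemma psi_finset_sum {ι : Type*} (s : Finset ι) (f : ι → ZMod p) :
    qomega p ^ ((∑ i ∈ s, f i).val) = ∏ i ∈ s, qomega p ^ ((f i).val) := by
  haveI : NeZero p := ⟨hp.out.ne_zero⟩
  classical
  induction s using Finset.cons_induction with
  | empty => simp
  | cons a s ha ih => rw [Finset.sum_cons, Finset.prod_cons, psi_add, ih]

lemma sum_psi_vec (z : Fin n → ZMod p) :
    ∑ y : Fin n → ZMod p, qomega p ^ ((∑ i, z i * y i : ZMod p)).val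
      = if z = 0 then ((p:ℂ))^n else 0 := by
  haveI : NeZero p := ⟨hp.out.ne_zero⟩
  split_ifs with hz
  · subst hz
    simp [Finset.card_univ]
  · have h1 : ∀ y : Fin n → ZMod p,
        qomega p ^ ((∑ i, z i * y i : ZMod p)).val = ∏ i, qomega p ^ ((z i * y i).val) :=
      fun y => psi_finset_sum Finset.univ _
    simp_rw [h1]
    rw [← Fintype.prod_sum (fun i c => qomega p ^ ((z i * c).val))]
    obtain ⟨i0, hi0⟩ : ∃ i, z i ≠ 0 := by
      by_contra h; push_neg at h; exact hz (funext h)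
    exact Finset.prod_eq_zero (Finset.mem_univ i0) (sum_psi_zmod hi0)

lemma parseval (X : Finset (Fin n → ZMod p)) :
    ∑ y : Fin n → ZMod p, (‖fhat X y‖)^2 = X.card / (p:ℝ)^n := by
  haveI : NeZero p := ⟨hp.out.ne_zero⟩
  have hp0 : ((p:ℂ))^n ≠ 0 := pow_ne_zero _ (Nat.cast_ne_zero.mpr hp.out.ne_zero)
  set c : ℂ := ((p:ℂ)^n)⁻¹ with hc
  have key : ∑ y : Fin n → ZMod p, (fhat X y) * (starRingEnd ℂ) (fhat X y)
      = (X.card : ℂ) / (p:ℂ)^n := by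
    have step1 : ∀ y : Fin n → ZMod p, (fhat X y) * (starRingEnd ℂ) (fhat X y)
        = c * c * ∑ x ∈ X, ∑ x' ∈ X,
            qomega p ^ ((∑ i, (x i - x' i) * y i : ZMod p)).val := by
      intro y
      rw [fhat, map_mul, map_sum]
      simp_rw [psi_conj]
      have hcc : (starRingEnd ℂ) c = c := by simp [hc]
      rw [hcc, mul_mul_mul_comm, Finset.sum_mul_sum]
      congr 1
      refine Finset.sum_congr rfl fun x _ => Finset.sum_congr rfl fun x' _ => ?_
      rw [← psi_add]
      congr 2
      rw [← Finset.sum_neg_distrib, ← Finset.sum_add_distrib]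
      exact Finset.sum_congr rfl fun i _ => by ring
    simp_rw [step1]
    rw [← Finset.mul_sum]
    rw [Finset.sum_comm]
    have : ∀ x ∈ X, ∑ y : Fin n → ZMod p, ∑ x' ∈ X,
        qomega p ^ ((∑ i, (x i - x' i) * y i : ZMod p)).val = ((p:ℂ))^n := by
      intro x hx
      rw [Finset.sum_comm]
      have h2 : ∀ x' : Fin n → ZMod p, ∑ y : Fin n → ZMod p,
          qomega p ^ ((∑ i, (x i - x' i) * y i : ZMod p)).val
          = if x = x' then ((p:ℂ))^n else 0 := by
        intro x'
        rw [sum_psi_vec]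
        congr 1
        simp only [eq_iff_iff]
        constructor
        · intro h; funext i
          have := congrFun h i
          simpa [sub_eq_zero] using this
        · intro h; subst h; funext i; simp
      simp_rw [h2]
      rw [Finset.sum_ite_eq]
      simp [hx]
    rw [Finset.sum_congr rfl this, Finset.sum_const, nsmul_eq_mul, hc]
    field_simp
  have habs : ∀ y : Fin n → ZMod p,
      (fhat X y) * (starRingEnd ℂ) (fhat X y) = ((‖fhat X y‖)^2 : ℝ) := by
    intro y
    rw [Complex.mul_conj, ← Complex.sq_norm]
  simp_rw [habs] at key
  rw [← Complex.ofReal_sum] at key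
  have : ((∑ y : Fin n → ZMod p, (‖fhat X y‖)^2 : ℝ) : ℂ)
      = (((X.card : ℝ) / (p:ℝ)^n : ℝ) : ℂ) := by
    rw [key]; push_cast; try ring
    try rfl
  exact_mod_cast this

end vec

noncomputable def Spec {p n : ℕ} (X : Finset (Fin n → ZMod p)) (γ : ℝ) : Set (Fin n → ZMod p) :=
  {r | r ≠ 0 ∧ γ ≤ ‖fhat X r‖}

noncomputable def dotL (p n : ℕ) (r : Fin n → ZMod p) : (Fin n → ZMod p) →ₗ[ZMod p] ZMod p :=
  ∑ i, r i • LinearMap.proj i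

lemma dim_bound {p n : ℕ} [hp : Fact p.Prime] (R : Finset (Fin n → ZMod p)) :
    (n : ℝ) - R.card ≤
      (Module.finrank (ZMod p) ↥(⨅ r ∈ R, LinearMap.ker (dotL p n r)) : ℝ) := by
  classical
  set L : (Fin n → ZMod p) →ₗ[ZMod p] (↥R → ZMod p) :=
    LinearMap.pi (fun r : ↥R => dotL p n r.1) with hL
  have hker : (⨅ r ∈ R, LinearMap.ker (dotL p n r)) = LinearMap.ker L := by
    ext v
    simp [hL, LinearMap.mem_ker, LinearMap.pi_apply, Submodule.mem_iInf, funext_iff,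
      Subtype.forall]
  rw [hker]
  have hrn := LinearMap.finrank_range_add_finrank_ker L
  have hdom : Module.finrank (ZMod p) (Fin n → ZMod p) = n := by
    simp [Module.finrank_pi]
  have hrange : Module.finrank (ZMod p) (LinearMap.range L) ≤ R.card := by
    have := Submodule.finrank_le (LinearMap.range L)
    simpa [Module.finrank_pi, Fintype.card_coe] using this
  have : (n : ℕ) ≤ Module.finrank (ZMod p) (LinearMap.ker L) + R.card := by omega
  have := (Nat.cast_le (α := ℝ)).mpr this
  push_cast at this
  linarith

theorem stmt1 {p n : ℕ} [Fact p.Prime] (α : ℝ) (hα : α ∈ Set.Ioc (0:ℝ) 1)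
    (X : Finset (Fin n → ZMod p)) (hX : (X.card : ℝ) = α * (p:ℝ) ^ n)
    (R : Finset (Fin n → ZMod p))
    (hR1 : Spec X (α ^ ((3:ℝ)/2)) ⊆ (R : Set (Fin n → ZMod p)))
    (hR2 : (R : Set (Fin n → ZMod p)) ⊆ Spec X (α ^ ((3:ℝ)/2) / 2)) :
    (n : ℝ) - 4 / α ^ 2 ≤
      (Module.finrank (ZMod p) ↥(⨅ r ∈ R, LinearMap.ker (dotL p n r)) : ℝ) := by
  have hα0 : 0 < α := hα.1
  have hpn : (0:ℝ) < (p:ℝ)^n :=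
    pow_pos (Nat.cast_pos.mpr (Fact.out : p.Prime).pos) n
  -- Parseval total
  have hpar : ∑ y : Fin n → ZMod p, (‖fhat X y‖)^2 = α := by
    rw [parseval, hX]
    field_simp
  -- each r ∈ R contributes at least α^3/4
  have hterm : ∀ r ∈ R, α^3 / 4 ≤ (‖fhat X r‖)^2 := by
    intro r hr
    have h := (hR2 (Finset.mem_coe.mpr hr)).2
    have h0 : 0 ≤ α ^ ((3:ℝ)/2) / 2 := by positivity
    have := mul_self_le_mul_self h0 h
    have hsq : (α ^ ((3:ℝ)/2) / 2) * (α ^ ((3:ℝ)/2) / 2) = α^3 / 4 := by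
      rw [div_mul_div_comm, ← Real.rpow_add hα0]
      norm_num
    rw [hsq] at this
    calc α^3/4 ≤ ‖fhat X r‖ * ‖fhat X r‖ := this
      _ = (‖fhat X r‖)^2 := (sq _).symm
  -- sum over R bounded by total
  have hsub : ∑ r ∈ R, (‖fhat X r‖)^2 ≤ α := by
    rw [← hpar]
    exact Finset.sum_le_sum_of_subset_of_nonneg (Finset.subset_univ R)
      (fun y _ _ => by positivity)
  have hcard : (R.card : ℝ) * (α^3/4) ≤ α := by
    calc (R.card : ℝ) * (α^3/4) = ∑ _r ∈ R, α^3/4 := by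
          rw [Finset.sum_const, nsmul_eq_mul]
      _ ≤ ∑ r ∈ R, (‖fhat X r‖)^2 := Finset.sum_le_sum hterm
      _ ≤ α := hsub
  have hRcard : (R.card : ℝ) ≤ 4 / α^2 := by
    rw [le_div_iff₀ (by positivity)]
    nlinarith [hα0]
  have := dim_bound (p := p) (n := n) R
  linarith
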